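/- arXiv:1609.03278 — 3 statements merged into one kernel-verified Lean document; each statement's English description precedes it below -/
import Mathlib

section
/- Let U be a nonzero n×n paraunitary matrix of Laurent polynomials over ℂ, and let Δ be a real number with 0 < Δ < 1. Then the complex matrix U[Δ] is invertible and ‖U[Δ]‖ · ‖U[Δ]⁻¹‖ ≤ Δ^{val(U) − deg(U)}, where ‖·‖ is the operator (spectral) norm. -/
open scoped ComplexConjugate
open LaurentPolynomial Finset

noncomputable section

/-- Evaluation of a Laurent polynomial at a complex number. -/
def Leval (ω : ℂ) (p : LaurentPolynomial ℂ) : ℂ :=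
  ∑ k ∈ p.coeff.support, p.coeff k * ω ^ k

/-- Para-conjugate of a Laurent polynomial: conjugate the coefficients and substitute `z⁻¹`. -/
def paraConj (p : LaurentPolynomial ℂ) : LaurentPolynomial ℂ :=
  AddMonoidAlgebra.ofCoeff
    (Finsupp.equivMapDomain (Equiv.neg ℤ) (Finsupp.mapRange (starRingEnd ℂ) (map_zero _) p.coeff))

/-- `U*`: the transpose of `U` with every entry para-conjugated. -/
def paraConjTranspose {n : ℕ} (U : Matrix (Fin n) (Fin n) (LaurentPolynomial ℂ)) :
    Matrix (Fin n) (Fin n) (LaurentPolynomial ℂ) :=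
  U.transpose.map paraConj

/-- A Laurent-polynomial matrix is paraunitary if `U* * U = 1`. -/
def IsParaunitary {n : ℕ} (U : Matrix (Fin n) (Fin n) (LaurentPolynomial ℂ)) : Prop :=
  paraConjTranspose U * U = 1

/-- Entrywise evaluation of a matrix of Laurent polynomials at a complex number. -/
def MatEval {n : ℕ} (ω : ℂ) (M : Matrix (Fin n) (Fin n) (LaurentPolynomial ℂ)) :
    Matrix (Fin n) (Fin n) ℂ :=
  M.map (Leval ω)

/-- A plane-rotation gate: identity except on the 2×2 principal submatrix in rows/columns
`a ≠ b`, where it is a real orthogonal 2×2 matrix (embedded as constant Laurent polynomials). -/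
def IsRotationGate {n : ℕ} (G : Matrix (Fin n) (Fin n) (LaurentPolynomial ℂ)) : Prop :=
  ∃ (a b : Fin n) (R : Matrix (Fin 2) (Fin 2) ℝ), a ≠ b ∧ R.transpose * R = 1 ∧
    G a a = LaurentPolynomial.C (R 0 0 : ℂ) ∧
    G a b = LaurentPolynomial.C (R 0 1 : ℂ) ∧
    G b a = LaurentPolynomial.C (R 1 0 : ℂ) ∧
    G b b = LaurentPolynomial.C (R 1 1 : ℂ) ∧
    (∀ i : Fin n, i ≠ a → i ≠ b → G i i = 1) ∧
    (∀ i j : Fin n, i ≠ j → ¬(i = a ∧ j = b) → ¬(i = b ∧ j = a) → G i j = 0)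

/-- A monomial gate: diagonal, equal to `1` on every diagonal entry except one, which is `z^k`. -/
def IsMonomialGate {n : ℕ} (G : Matrix (Fin n) (Fin n) (LaurentPolynomial ℂ)) : Prop :=
  ∃ (a : Fin n) (k : ℤ),
    G a a = LaurentPolynomial.T k ∧
    (∀ i : Fin n, i ≠ a → G i i = 1) ∧
    (∀ i j : Fin n, i ≠ j → G i j = 0)

/-- A Laurent lift of length `m`: `M 0 = 1` and each step is left multiplication by a
plane-rotation or monomial gate. -/
def IsLaurentLift {n : ℕ} (m : ℕ) (M : ℕ → Matrix (Fin n) (Fin n) (LaurentPolynomial ℂ)) : Prop :=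
  M 0 = 1 ∧ ∀ t < m, ∃ G : Matrix (Fin n) (Fin n) (LaurentPolynomial ℂ),
    (IsRotationGate G ∨ IsMonomialGate G) ∧ M (t + 1) = G * M t

/-- The union of the supports of all the entries of a Laurent-polynomial matrix. -/
def matSupport {n : ℕ} (M : Matrix (Fin n) (Fin n) (LaurentPolynomial ℂ)) : Finset ℤ :=
  (Finset.univ : Finset (Fin n × Fin n)).biUnion fun ij => (M ij.1 ij.2).coeff.support

/-- `deg(M)`: the maximal exponent with a nonzero coefficient over all nonzero entries
(junk value `0` for the zero matrix). -/
def matDeg {n : ℕ} (M : Matrix (Fin n) (Fin n) (LaurentPolynomial ℂ)) : ℤ :=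
  WithBot.unbotD 0 (matSupport M).max

/-- `val(M)`: the minimal exponent with a nonzero coefficient over all nonzero entries
(junk value `0` for the zero matrix). -/
def matVal {n : ℕ} (M : Matrix (Fin n) (Fin n) (LaurentPolynomial ℂ)) : ℤ :=
  WithTop.untopD 0 (matSupport M).min

/-- A Laurent lift is `Δ`-algebraically `κ`-well conditioned if
`Δ ^ (val(M_t) - deg(M_t)) ≤ κ` for all `t`. -/
def IsAlgWellConditioned {n : ℕ} (m : ℕ) (M : ℕ → Matrix (Fin n) (Fin n) (LaurentPolynomial ℂ))
    (Δ κ : ℝ) : Prop :=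
  ∀ t ≤ m, Δ ^ (matVal (M t) - matDeg (M t)) ≤ κ

/-- The L2 operator (spectral) norm of a complex matrix. -/
def specNorm {n : ℕ} (A : Matrix (Fin n) (Fin n) ℂ) : ℝ :=
  ‖Matrix.toEuclideanCLM (𝕜 := ℂ) A‖

/-- The Walsh–Hadamard matrix of order `n = 2^s`:
`H_n(i,j) = n^{-1/2} · (-1)^{⟨[i],[j]⟩}` with `⟨·,·⟩` the mod-2 inner product of bit vectors. -/
def WalshHadamard (s : ℕ) : Matrix (Fin (2 ^ s)) (Fin (2 ^ s)) ℝ :=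
  fun i j => (Real.sqrt (2 ^ s))⁻¹ *
    (-1 : ℝ) ^ (∑ r ∈ Finset.range s, (Nat.testBit i.val r).toNat * (Nat.testBit j.val r).toNat)

/-- The quasi-entropy kernel `h(u) = -u·log₂|u|` (note `h 0 = 0`, since `Real.logb 2 0 = 0`). -/
def hQE (u : ℂ) : ℂ := -u * (Real.logb 2 ‖u‖ : ℂ)

/-- The preconditioned quasi-entropy
`Φ_{A,B}(M) = Σ_k Σ_{i,j} h(coeff((M·A)_{i,j},k) · conj(coeff((M·B)_{i,j},k)))`.
The sum over `k` is restricted to a finite set supporting all nonzero terms. -/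
def Phi {n : ℕ} (A B M : Matrix (Fin n) (Fin n) (LaurentPolynomial ℂ)) : ℂ :=
  ∑ i : Fin n, ∑ j : Fin n,
    ∑ k ∈ ((M * A) i j).coeff.support ∪ ((M * B) i j).coeff.support,
      hQE (((M * A) i j).coeff k * conj (((M * B) i j).coeff k))

/-- The norm of a Laurent polynomial: `sqrt (Σ_k |coeff(p,k)|²)`. -/
def pnorm (p : LaurentPolynomial ℂ) : ℝ :=
  Real.sqrt (∑ k ∈ p.coeff.support, ‖p.coeff k‖ ^ 2)

/-- The norm of the `i`-th row of a Laurent-polynomial matrix. -/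
def rowNorm {n : ℕ} (M : Matrix (Fin n) (Fin n) (LaurentPolynomial ℂ)) (i : Fin n) : ℝ :=
  Real.sqrt (∑ j : Fin n, pnorm (M i j) ^ 2)

/-- The `(2,∞)` norm of a Laurent-polynomial matrix: the maximum row norm. -/
def norm2inf {n : ℕ} (M : Matrix (Fin n) (Fin n) (LaurentPolynomial ℂ)) : ℝ :=
  ⨆ i : Fin n, rowNorm M i

end

noncomputable section AuxProofs

open Complex Metric Matrix

/-- Evaluation at a nonzero complex number as an algebra homomorphism. -/
def LevalHom (ω : ℂˣ) : LaurentPolynomial ℂ →ₐ[ℂ] ℂ :=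
  AddMonoidAlgebra.lift ℂ ℂ ℤ ((Units.coeHom ℂ).comp (zpowersHom ℂˣ ω))

lemma Leval_eq_hom (ω : ℂˣ) (p : LaurentPolynomial ℂ) :
    Leval (ω : ℂ) p = LevalHom ω p := by
  rw [LevalHom, AddMonoidAlgebra.lift_apply]
  rw [Leval, Finsupp.sum]
  refine Finset.sum_congr rfl fun k _ => ?_
  simp [zpowersHom_apply, Units.val_zpow_eq_zpow_val, smul_eq_mul]

lemma MatEval_eq_map {n : ℕ} (ω : ℂˣ) (M : Matrix (Fin n) (Fin n) (LaurentPolynomial ℂ)) :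
    MatEval (ω : ℂ) M = (LevalHom ω : LaurentPolynomial ℂ →+* ℂ).mapMatrix M := by
  ext i j
  exact Leval_eq_hom ω (M i j)

lemma MatEval_mul {n : ℕ} (ω : ℂˣ) (A B : Matrix (Fin n) (Fin n) (LaurentPolynomial ℂ)) :
    MatEval (ω : ℂ) (A * B) = MatEval (ω : ℂ) A * MatEval (ω : ℂ) B := by
  rw [MatEval_eq_map, MatEval_eq_map, MatEval_eq_map, _root_.map_mul]

lemma MatEval_one {n : ℕ} (ω : ℂˣ) :
    MatEval (ω : ℂ) (1 : Matrix (Fin n) (Fin n) (LaurentPolynomial ℂ)) = 1 := by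
  rw [MatEval_eq_map, _root_.map_one]

lemma Leval_paraConj (ω : ℂ) (p : LaurentPolynomial ℂ) :
    Leval ω (paraConj p) = conj (Leval ((conj ω)⁻¹) p) := by
  have hL : ∀ (μ : ℂ) (q : LaurentPolynomial ℂ),
      Leval μ q = q.coeff.sum fun k a => a * μ ^ k := fun _ _ => rfl
  rw [hL, hL, paraConj, AddMonoidAlgebra.coeff_ofCoeff, Finsupp.equivMapDomain_eq_mapDomain,
    Finsupp.sum_mapDomain_index (by simp) (by intros; ring),
    Finsupp.sum_mapRange_index (by simp)]
  rw [map_finsuppSum]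
  refine Finsupp.sum_congr fun k _ => ?_
  rw [_root_.map_mul, map_zpow₀, map_inv₀, Complex.conj_conj, Equiv.neg_apply]
  simp [_root_.zpow_neg, _root_.inv_zpow]

lemma MatEval_paraConjT {n : ℕ} (ω : ℂ) (U : Matrix (Fin n) (Fin n) (LaurentPolynomial ℂ)) :
    MatEval ω (paraConjTranspose U) = (MatEval ((conj ω)⁻¹) U)ᴴ := by
  ext i j
  simp only [MatEval, paraConjTranspose, Matrix.map_apply, Matrix.conjTranspose_apply,
    Matrix.transpose_apply]
  exact Leval_paraConj ω (U j i)

lemma paraunitary_key {n : ℕ} (U : Matrix (Fin n) (Fin n) (LaurentPolynomial ℂ))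
    (hU : IsParaunitary U) (ω : ℂ) (hω : ω ≠ 0) :
    (MatEval ((conj ω)⁻¹) U)ᴴ * MatEval ω U = 1 := by
  have h := congrArg (MatEval ω) hU
  rw [show ω = ((Units.mk0 ω hω : ℂˣ) : ℂ) from rfl] at h
  rw [MatEval_mul, MatEval_one] at h
  rw [← MatEval_paraConjT]
  exact h

lemma paraunitary_norm_le_one {n : ℕ} (hn : n ≠ 0)
    (U : Matrix (Fin n) (Fin n) (LaurentPolynomial ℂ)) (hU : IsParaunitary U)
    (ω : ℂ) (hω : ‖ω‖ = 1) :
    ‖Matrix.toEuclideanCLM (𝕜 := ℂ) (MatEval ω U)‖ ≤ 1 := by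
  haveI : Nonempty (Fin n) := ⟨⟨0, Nat.pos_of_ne_zero hn⟩⟩
  haveI : Nontrivial (EuclideanSpace ℂ (Fin n)) :=
    inferInstanceAs (Nontrivial (PiLp 2 fun _ : Fin n => ℂ))
  have hω0 : ω ≠ 0 := by
    intro h; rw [h] at hω; simp at hω
  have hinv : (conj ω)⁻¹ = ω := by
    rw [← Complex.inv_eq_conj hω, inv_inv]
  have key := paraunitary_key U hU ω hω0
  rw [hinv] at key
  set A := MatEval ω U
  have h2 : star (Matrix.toEuclideanCLM (𝕜 := ℂ) A) * Matrix.toEuclideanCLM (𝕜 := ℂ) A = 1 := by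
    have hsA : star A * A = 1 := by rw [Matrix.star_eq_conjTranspose]; exact key
    rw [← map_star, ← _root_.map_mul, hsA, _root_.map_one]
  have h3 : ‖Matrix.toEuclideanCLM (𝕜 := ℂ) A‖ * ‖Matrix.toEuclideanCLM (𝕜 := ℂ) A‖ = 1 := by
    rw [← CStarRing.norm_star_mul_self, h2]
    rw [show (1 : EuclideanSpace ℂ (Fin n) →L[ℂ] EuclideanSpace ℂ (Fin n)) =
      ContinuousLinearMap.id ℂ _ from rfl]
    exact ContinuousLinearMap.norm_id
  nlinarith [norm_nonneg (Matrix.toEuclideanCLM (𝕜 := ℂ) A)]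

lemma MatEval_eq_sum {n : ℕ} (U : Matrix (Fin n) (Fin n) (LaurentPolynomial ℂ)) (ω : ℂ) :
    MatEval ω U
      = ∑ k ∈ matSupport U, ω ^ k • Matrix.of (fun i j => (U i j).coeff k) := by
  ext i j
  have h1 : (∑ k ∈ matSupport U, ω ^ k • Matrix.of (fun i j => (U i j).coeff k)) i j
      = ∑ k ∈ matSupport U, ω ^ k * (U i j).coeff k := by
    simp only [Matrix.sum_apply, Matrix.smul_apply, Matrix.of_apply, smul_eq_mul]
  rw [h1]
  rw [show MatEval ω U i j = ∑ k ∈ (U i j).coeff.support, (U i j).coeff k * ω ^ k from rfl]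
  calc ∑ k ∈ (U i j).coeff.support, (U i j).coeff k * ω ^ k
      = ∑ k ∈ matSupport U, (U i j).coeff k * ω ^ k :=
        Finset.sum_subset (fun k hk => Finset.mem_biUnion.2 ⟨(i, j), Finset.mem_univ _, hk⟩)
          (fun k _ hk => by rw [Finsupp.notMem_support_iff.1 hk, zero_mul])
    _ = ∑ k ∈ matSupport U, ω ^ k * (U i j).coeff k :=
        Finset.sum_congr rfl fun k _ => mul_comm _ _

end AuxProofs

open Matrix
open scoped Matrix.Norms.L2Operator
set_option maxHeartbeats 1600000
set_option synthInstance.maxHeartbeats 200000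
/-- condition number of an evaluated paraunitary matrix. -/
theorem paraunitary_eval_condition_bound {n : ℕ}
    (U : Matrix (Fin n) (Fin n) (LaurentPolynomial ℂ)) (hU : IsParaunitary U) (hU0 : U ≠ 0)
    (Δ : ℝ) (h0 : 0 < Δ) (h1 : Δ < 1) :
    IsUnit (MatEval (Δ : ℂ) U) ∧
      specNorm (MatEval (Δ : ℂ) U) * specNorm (MatEval (Δ : ℂ) U)⁻¹
        ≤ Δ ^ (matVal U - matDeg U) := by
  classical
  rcases Nat.eq_zero_or_pos n with hn | hn
  · subst hn
    exact absurd (Subsingleton.elim U 0) hU0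
  have hn' : n ≠ 0 := hn.ne'
  haveI : Nonempty (Fin n) := ⟨⟨0, hn⟩⟩
  set δ : ℂ := (Δ : ℂ) with hδdef
  have hδ0 : δ ≠ 0 := Complex.ofReal_ne_zero.2 (ne_of_gt h0)
  have hconjδ : conj δ = δ := Complex.conj_ofReal Δ
  have hS : (matSupport U).Nonempty := by
    obtain ⟨i, j, hij⟩ : ∃ i j, U i j ≠ 0 := by
      by_contra h
      push_neg at h
      exact hU0 (by funext i j; exact h i j)
    obtain ⟨k, hk⟩ := Finsupp.support_nonempty_iff.2
      (show (U i j).coeff ≠ 0 from fun h => hij (by rw [← AddMonoidAlgebra.ofCoeff_coeff (U i j), h, AddMonoidAlgebra.ofCoeff_zero]))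
    exact ⟨k, Finset.mem_biUnion.2 ⟨(i, j), Finset.mem_univ _, hk⟩⟩
  set v := (matSupport U).min' hS with hvdef
  set d := (matSupport U).max' hS with hddef
  have hval : matVal U = v := by rw [matVal, ← Finset.coe_min' hS]; rfl
  have hdeg : matDeg U = d := by rw [matDeg, ← Finset.coe_max' hS]; rfl
  have hnormpow : ∀ m : ℤ, ‖δ ^ m‖ = Δ ^ m := fun m => by
    rw [norm_zpow, hδdef, Complex.norm_real, Real.norm_eq_abs, abs_of_pos h0]
  set A : ℤ → Matrix (Fin n) (Fin n) ℂ := fun k => Matrix.of fun i j => (U i j).coeff k with hAdef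
  have hsum : ∀ ω : ℂ, Matrix.toEuclideanCLM (𝕜 := ℂ) (MatEval ω U)
      = ∑ k ∈ matSupport U, ω ^ k • Matrix.toEuclideanCLM (𝕜 := ℂ) (A k) := by
    intro ω
    rw [MatEval_eq_sum, _root_.map_sum]
    exact Finset.sum_congr rfl fun k _ => _root_.map_smul _ _ _
  set f : ℂ → (EuclideanSpace ℂ (Fin n) →L[ℂ] EuclideanSpace ℂ (Fin n)) :=
    fun z => ∑ k ∈ matSupport U, z ^ (k - v).toNat • Matrix.toEuclideanCLM (𝕜 := ℂ) (A k)
    with hfdef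
  set g : ℂ → (EuclideanSpace ℂ (Fin n) →L[ℂ] EuclideanSpace ℂ (Fin n)) :=
    fun z => ∑ k ∈ matSupport U, z ^ (d - k).toNat • Matrix.toEuclideanCLM (𝕜 := ℂ) (A k)
    with hgdef
  have hfd : Differentiable ℂ f := by
    apply Differentiable.fun_sum
    intro k _
    exact (differentiable_pow _).smul_const _
  have hgd : Differentiable ℂ g := by
    apply Differentiable.fun_sum
    intro k _
    exact (differentiable_pow _).smul_const _
  have hf_eq : ∀ z : ℂ, z ≠ 0 →
      f z = (z ^ v)⁻¹ • Matrix.toEuclideanCLM (𝕜 := ℂ) (MatEval z U) := by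
    intro z hz
    rw [hsum z, Finset.smul_sum]
    refine Finset.sum_congr rfl fun k hk => ?_
    have hkv : v ≤ k := Finset.min'_le _ _ hk
    rw [smul_smul]
    congr 1
    calc z ^ (k - v).toNat = z ^ ((k - v).toNat : ℤ) := (zpow_natCast z _).symm
      _ = z ^ (k - v) := by rw [Int.toNat_of_nonneg (sub_nonneg.2 hkv)]
      _ = z ^ k / z ^ v := zpow_sub₀ hz k v
      _ = (z ^ v)⁻¹ * z ^ k := by rw [div_eq_mul_inv, mul_comm]
  have hg_eq : ∀ z : ℂ, z ≠ 0 →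
      g z = z ^ d • Matrix.toEuclideanCLM (𝕜 := ℂ) (MatEval z⁻¹ U) := by
    intro z hz
    rw [hsum z⁻¹, Finset.smul_sum]
    refine Finset.sum_congr rfl fun k hk => ?_
    have hkd : k ≤ d := Finset.le_max' _ _ hk
    rw [smul_smul]
    congr 1
    calc z ^ (d - k).toNat = z ^ ((d - k).toNat : ℤ) := (zpow_natCast z _).symm
      _ = z ^ (d - k) := by rw [Int.toNat_of_nonneg (sub_nonneg.2 hkd)]
      _ = z ^ d / z ^ k := zpow_sub₀ hz d k
      _ = z ^ d * (z⁻¹) ^ k := by rw [div_eq_mul_inv, _root_.inv_zpow]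
  have hfb : ∀ z ∈ frontier (Metric.ball (0 : ℂ) 1), ‖f z‖ ≤ 1 := by
    intro z hz
    rw [frontier_ball (0 : ℂ) one_ne_zero] at hz
    have hz1 : ‖z‖ = 1 := by rwa [mem_sphere_iff_norm, sub_zero] at hz
    have hz0 : z ≠ 0 := by intro h; rw [h, norm_zero] at hz1; norm_num at hz1
    rw [hf_eq z hz0, norm_smul ((z ^ v)⁻¹) (Matrix.toEuclideanCLM (𝕜 := ℂ) (MatEval z U)),
      norm_inv, norm_zpow, hz1, _root_.one_zpow, inv_one, one_mul]
    exact paraunitary_norm_le_one hn' U hU z hz1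
  have hgb : ∀ z ∈ frontier (Metric.ball (0 : ℂ) 1), ‖g z‖ ≤ 1 := by
    intro z hz
    rw [frontier_ball (0 : ℂ) one_ne_zero] at hz
    have hz1 : ‖z‖ = 1 := by rwa [mem_sphere_iff_norm, sub_zero] at hz
    have hz0 : z ≠ 0 := by intro h; rw [h, norm_zero] at hz1; norm_num at hz1
    rw [hg_eq z hz0, norm_smul (z ^ d) (Matrix.toEuclideanCLM (𝕜 := ℂ) (MatEval z⁻¹ U)),
      norm_zpow, hz1, _root_.one_zpow, one_mul]
    refine paraunitary_norm_le_one hn' U hU z⁻¹ ?_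
    rw [norm_inv, hz1, inv_one]
  have hδmem : δ ∈ closure (Metric.ball (0 : ℂ) 1) := by
    rw [closure_ball (0 : ℂ) one_ne_zero, Metric.mem_closedBall, dist_zero_right,
      hδdef, Complex.norm_real, Real.norm_eq_abs, abs_of_pos h0]
    exact le_of_lt h1
  have hfΔ : ‖f δ‖ ≤ 1 :=
    Complex.norm_le_of_forall_mem_frontier_norm_le Metric.isBounded_ball
      hfd.diffContOnCl hfb hδmem
  have hgΔ : ‖g δ‖ ≤ 1 :=
    Complex.norm_le_of_forall_mem_frontier_norm_le Metric.isBounded_ball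
      hgd.diffContOnCl hgb hδmem
  have bound1 : specNorm (MatEval δ U) ≤ Δ ^ v := by
    have heq : Matrix.toEuclideanCLM (𝕜 := ℂ) (MatEval δ U) = δ ^ v • f δ := by
      rw [hf_eq δ hδ0, smul_smul, mul_inv_cancel₀ (zpow_ne_zero _ hδ0), one_smul]
    rw [specNorm, heq, norm_smul (δ ^ v) (f δ), hnormpow]
    calc Δ ^ v * ‖f δ‖ ≤ Δ ^ v * 1 :=
          mul_le_mul_of_nonneg_left hfΔ (le_of_lt (zpow_pos h0 v))
      _ = Δ ^ v := mul_one _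
  have bound2 : ‖Matrix.toEuclideanCLM (𝕜 := ℂ) (MatEval δ⁻¹ U)‖ ≤ Δ ^ (-d) := by
    have heq : Matrix.toEuclideanCLM (𝕜 := ℂ) (MatEval δ⁻¹ U) = (δ ^ d)⁻¹ • g δ := by
      rw [hg_eq δ hδ0, smul_smul, inv_mul_cancel₀ (zpow_ne_zero _ hδ0), one_smul]
    rw [heq, norm_smul ((δ ^ d)⁻¹) (g δ), norm_inv, hnormpow, ← _root_.zpow_neg]
    calc Δ ^ (-d) * ‖g δ‖ ≤ Δ ^ (-d) * 1 :=
          mul_le_mul_of_nonneg_left hgΔ (le_of_lt (zpow_pos h0 _))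
      _ = Δ ^ (-d) := mul_one _
  have hkey := paraunitary_key U hU δ hδ0
  rw [hconjδ] at hkey
  have hunit : IsUnit (MatEval δ U) := (Matrix.isUnit_iff_isUnit_det _).2 (Matrix.isUnit_det_of_left_inverse hkey)
  have hinv : (MatEval δ U)⁻¹ = (MatEval δ⁻¹ U)ᴴ := Matrix.inv_eq_left_inv hkey
  have bound2' : specNorm (MatEval δ U)⁻¹ ≤ Δ ^ (-d) := by
    have e : specNorm (MatEval δ U)⁻¹ = ‖(MatEval δ⁻¹ U)ᴴ‖ := by rw [specNorm, hinv]; rfl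
    rw [e, Matrix.l2_opNorm_conjTranspose, Matrix.cstar_norm_def]
    exact bound2
  refine ⟨hunit, ?_⟩
  rw [hval, hdeg, sub_eq_add_neg, zpow_add₀ (ne_of_gt h0)]
  exact mul_le_mul bound1 bound2' (norm_nonneg _) (le_of_lt (zpow_pos h0 _))
end

section
/- Coordinate-level quasi-entropy change bound: there is a universal constant C > 0 such that for every real 2×2 rotation matrix R and all vectors α, β ∈ ℂ², setting α' = Rα and β' = Rβ, one has |h(α₁·conj(β₁)) + h(α₂·conj(β₂)) − h(α'₁·conj(β'₁)) − h(α'₂·conj(β'₂))| ≤ C · ‖α‖ · ‖β‖, where ‖·‖ is the Euclidean norm on ℂ² and |·| is the complex modulus. -/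
open scoped ComplexConjugate
open LaurentPolynomial Finset

set_option maxHeartbeats 1000000

lemma hQE_abs_le (u : ℂ) (hu : ‖u‖ ≤ 1) : ‖hQE u‖ ≤ 2 := by
  rcases eq_or_ne u 0 with rfl | h
  · simp [hQE]
  have ht : 0 < ‖u‖ := norm_pos_iff.mpr h
  set t := ‖u‖ with htdef
  have hlog : Real.log (1/t) ≤ 1/t - 1 := Real.log_le_sub_one_of_pos (by positivity)
  have hneg : -Real.log t ≤ 1/t - 1 := by
    rw [one_div, Real.log_inv] at hlog; rw [one_div]; linarith
  have h1 : t * (-Real.log t) ≤ 1 := by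
    calc t * (-Real.log t) ≤ t * (1/t - 1) := by nlinarith
    _ = 1 - t := by field_simp
    _ ≤ 1 := by linarith
  have hlog2 : (0.6931471803 : ℝ) < Real.log 2 := Real.log_two_gt_d9
  have : ‖hQE u‖ = t * |Real.logb 2 t| := by
    simp [hQE, norm_mul, Complex.norm_real, abs_mul, htdef]
  rw [this]
  rcases le_or_gt 0 (Real.logb 2 t) with hge | hlt
  · have : Real.logb 2 t ≤ 0 := Real.logb_nonpos (by norm_num) (le_of_lt ht) hu
    have h0 : Real.logb 2 t = 0 := le_antisymm this hge
    simp [h0]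
  · rw [abs_of_neg hlt]
    have : t * -Real.logb 2 t = (t * (-Real.log t)) / Real.log 2 := by
      rw [Real.logb]; field_simp
    rw [this]
    rw [div_le_iff₀ (by linarith)]
    nlinarith

lemma hQE_smul (s : ℝ) (hs : 0 < s) (u : ℂ) :
    hQE ((s:ℂ) * u) = (s:ℂ) * hQE u - (s:ℂ) * u * (Real.logb 2 s : ℂ) := by
  rcases eq_or_ne u 0 with rfl | h
  · simp [hQE]
  have : ‖(s:ℂ) * u‖ = s * ‖u‖ := by
    simp [norm_mul, Complex.norm_real, abs_of_pos hs]
  rw [hQE, hQE, this, Real.logb_mul (ne_of_gt hs) (norm_ne_zero_iff.mpr h)]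
  push_cast
  ring

lemma rot_inv (θ : ℝ) (γ δ : Fin 2 → ℂ) :
    ((Real.cos θ:ℂ) * γ 0 + (Real.sin θ:ℂ) * γ 1) *
        conj ((Real.cos θ:ℂ) * δ 0 + (Real.sin θ:ℂ) * δ 1)
      + ((-(Real.sin θ):ℂ) * γ 0 + (Real.cos θ:ℂ) * γ 1) *
        conj ((-(Real.sin θ):ℂ) * δ 0 + (Real.cos θ:ℂ) * δ 1)
    = γ 0 * conj (δ 0) + γ 1 * conj (δ 1) := by
  have hcs : (Real.cos θ:ℂ)^2 + (Real.sin θ:ℂ)^2 = 1 := by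
    exact_mod_cast congrArg (Complex.ofReal) (Real.cos_sq_add_sin_sq θ)
  simp only [map_add, map_mul, Complex.conj_ofReal, map_neg]
  linear_combination (γ 0 * conj (δ 0) + γ 1 * conj (δ 1)) * hcs



/-- coordinate-level quasi-entropy change bound under a 2×2 rotation. -/
theorem hQE_rotation_change_bound :
    ∃ C : ℝ, 0 < C ∧
      ∀ (θ : ℝ) (α β α' β' : Fin 2 → ℂ),
        α' = (Matrix.of
            !![(Real.cos θ : ℂ), (Real.sin θ : ℂ); (-(Real.sin θ) : ℂ), (Real.cos θ : ℂ)]).mulVec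
            α →
        β' = (Matrix.of
            !![(Real.cos θ : ℂ), (Real.sin θ : ℂ); (-(Real.sin θ) : ℂ), (Real.cos θ : ℂ)]).mulVec
            β →
        ‖hQE (α 0 * conj (β 0)) + hQE (α 1 * conj (β 1))
            - hQE (α' 0 * conj (β' 0)) - hQE (α' 1 * conj (β' 1))‖
          ≤ C * Real.sqrt (‖α 0‖ ^ 2 + ‖α 1‖ ^ 2)
              * Real.sqrt (‖β 0‖ ^ 2 + ‖β 1‖ ^ 2) := by
  refine ⟨8, by norm_num, ?_⟩
  intro θ α β α' β' hα hβ
  subst hα hβ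
  set c := (Real.cos θ : ℂ)
  set sn := (Real.sin θ : ℂ)
  have hα0 : (Matrix.of !![c, sn; -sn, c]).mulVec α 0 = c * α 0 + sn * α 1 := by
    simp only [Matrix.mulVec, dotProduct, Fin.sum_univ_two]; rfl
  have hα1 : (Matrix.of !![c, sn; -sn, c]).mulVec α 1 = -sn * α 0 + c * α 1 := by
    simp only [Matrix.mulVec, dotProduct, Fin.sum_univ_two]; rfl
  have hβ0 : (Matrix.of !![c, sn; -sn, c]).mulVec β 0 = c * β 0 + sn * β 1 := by
    simp only [Matrix.mulVec, dotProduct, Fin.sum_univ_two]; rfl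
  have hβ1 : (Matrix.of !![c, sn; -sn, c]).mulVec β 1 = -sn * β 0 + c * β 1 := by
    simp only [Matrix.mulVec, dotProduct, Fin.sum_univ_two]; rfl
  rw [hα0, hα1, hβ0, hβ1]
  set a := Real.sqrt (‖α 0‖ ^ 2 + ‖α 1‖ ^ 2) with ha
  set b := Real.sqrt (‖β 0‖ ^ 2 + ‖β 1‖ ^ 2) with hb
  by_cases h0 : α 0 = 0 ∧ α 1 = 0
  · obtain ⟨h1, h2⟩ := h0
    simp only [h1, h2, zero_mul, mul_zero, map_zero]
    simp [hQE]
    positivity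
  by_cases h0' : β 0 = 0 ∧ β 1 = 0
  · obtain ⟨h1, h2⟩ := h0'
    simp only [h1, h2, zero_mul, mul_zero, map_zero]
    simp [hQE]
    positivity
  have hapos : 0 < a := by
    apply Real.sqrt_pos.2
    rcases not_and_or.1 h0 with h | h
    · have := norm_pos_iff.mpr h; positivity
    · have := norm_pos_iff.mpr h; positivity
  have hbpos : 0 < b := by
    apply Real.sqrt_pos.2
    rcases not_and_or.1 h0' with h | h
    · have := norm_pos_iff.mpr h; positivity
    · have := norm_pos_iff.mpr h; positivity
  set s := a * b with hs
  have hspos : 0 < s := mul_pos hapos hbpos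
  have hsne : (s : ℂ) ≠ 0 := by exact_mod_cast hspos.ne'
  -- abs bounds
  have habs_a' : ∀ z : ℂ, ‖z‖ ^ 2 ≤ ‖α 0‖ ^ 2 + ‖α 1‖ ^ 2 →
      ‖z‖ ≤ a := by
    intro z hz
    rw [ha, ← Real.sqrt_sq (norm_nonneg z)]
    exact Real.sqrt_le_sqrt hz
  have habs_b' : ∀ z : ℂ, ‖z‖ ^ 2 ≤ ‖β 0‖ ^ 2 + ‖β 1‖ ^ 2 →
      ‖z‖ ≤ b := by
    intro z hz
    rw [hb, ← Real.sqrt_sq (norm_nonneg z)]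
    exact Real.sqrt_le_sqrt hz
  have ha0 : ‖α 0‖ ≤ a := habs_a' _ (by nlinarith [sq_nonneg (‖α 1‖)])
  have ha1 : ‖α 1‖ ≤ a := habs_a' _ (by nlinarith [sq_nonneg (‖α 0‖)])
  have hb0 : ‖β 0‖ ≤ b := habs_b' _ (by nlinarith [sq_nonneg (‖β 1‖)])
  have hb1 : ‖β 1‖ ≤ b := habs_b' _ (by nlinarith [sq_nonneg (‖β 0‖)])
  -- norm preservation for rotated entries
  have hnormα : ‖c * α 0 + sn * α 1‖ ^ 2 + ‖-sn * α 0 + c * α 1‖ ^ 2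
      = ‖α 0‖ ^ 2 + ‖α 1‖ ^ 2 := by
    have := rot_inv θ α α
    simp only [Complex.mul_conj] at this
    have h2 : ((Complex.normSq (c * α 0 + sn * α 1) : ℂ) + (Complex.normSq (-sn * α 0 + c * α 1) : ℂ))
        = ((Complex.normSq (α 0) : ℂ) + (Complex.normSq (α 1) : ℂ)) := this
    have h3 : (Complex.normSq (c * α 0 + sn * α 1) + Complex.normSq (-sn * α 0 + c * α 1) : ℝ)
        = Complex.normSq (α 0) + Complex.normSq (α 1) := by exact_mod_cast h2
    simpa [Complex.sq_norm] using h3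
  have hnormβ : ‖c * β 0 + sn * β 1‖ ^ 2 + ‖-sn * β 0 + c * β 1‖ ^ 2
      = ‖β 0‖ ^ 2 + ‖β 1‖ ^ 2 := by
    have := rot_inv θ β β
    simp only [Complex.mul_conj] at this
    have h2 : ((Complex.normSq (c * β 0 + sn * β 1) : ℂ) + (Complex.normSq (-sn * β 0 + c * β 1) : ℂ))
        = ((Complex.normSq (β 0) : ℂ) + (Complex.normSq (β 1) : ℂ)) := this
    have h3 : (Complex.normSq (c * β 0 + sn * β 1) + Complex.normSq (-sn * β 0 + c * β 1) : ℝ)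
        = Complex.normSq (β 0) + Complex.normSq (β 1) := by exact_mod_cast h2
    simpa [Complex.sq_norm] using h3
  -- key rewriting
  have key : ∀ u : ℂ, hQE u = (s:ℂ) * hQE (u / s) - u * (Real.logb 2 s : ℂ) := by
    intro u
    have h1 : u = (s:ℂ) * (u / (s:ℂ)) := by field_simp
    calc hQE u = hQE ((s:ℂ) * (u / (s:ℂ))) := by rw [← h1]
      _ = (s:ℂ) * hQE (u / s) - (s:ℂ) * (u / (s:ℂ)) * (Real.logb 2 s : ℂ) := hQE_smul s hspos _
      _ = (s:ℂ) * hQE (u / s) - u * (Real.logb 2 s : ℂ) := by rw [← h1]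
  set u0 := α 0 * conj (β 0)
  set u1 := α 1 * conj (β 1)
  set v0 := (c * α 0 + sn * α 1) * conj (c * β 0 + sn * β 1)
  set v1 := (-sn * α 0 + c * α 1) * conj (-sn * β 0 + c * β 1)
  have hinv : v0 + v1 = u0 + u1 := rot_inv θ α β
  have hD : hQE u0 + hQE u1 - hQE v0 - hQE v1
      = (s:ℂ) * (hQE (u0 / s) + hQE (u1 / s) - hQE (v0 / s) - hQE (v1 / s)) := by
    rw [key u0, key u1, key v0, key v1]
    have : u0 + u1 - v0 - v1 = 0 := by rw [← hinv]; ring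
    linear_combination (-(Real.logb 2 s : ℂ)) * this
  rw [hD]
  have hbnd : ∀ u : ℂ, ‖u‖ ≤ s → ‖hQE (u / s)‖ ≤ 2 := by
    intro u hu
    apply hQE_abs_le
    rw [norm_div, Complex.norm_real, Real.norm_eq_abs, abs_of_pos hspos, div_le_one hspos]
    exact hu
  have hu0 : ‖u0‖ ≤ s := by
    rw [norm_mul, Complex.norm_conj]
    exact mul_le_mul ha0 hb0 (norm_nonneg _) hapos.le
  have hu1 : ‖u1‖ ≤ s := by
    rw [norm_mul, Complex.norm_conj]
    exact mul_le_mul ha1 hb1 (norm_nonneg _) hapos.le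
  have hv0 : ‖v0‖ ≤ s := by
    rw [norm_mul, Complex.norm_conj]
    refine mul_le_mul (habs_a' _ ?_) (habs_b' _ ?_) (norm_nonneg _) hapos.le
    · rw [← hnormα]; nlinarith [sq_nonneg (‖-sn * α 0 + c * α 1‖)]
    · rw [← hnormβ]; nlinarith [sq_nonneg (‖-sn * β 0 + c * β 1‖)]
  have hv1 : ‖v1‖ ≤ s := by
    rw [norm_mul, Complex.norm_conj]
    refine mul_le_mul (habs_a' _ ?_) (habs_b' _ ?_) (norm_nonneg _) hapos.le
    · rw [← hnormα]; nlinarith [sq_nonneg (‖c * α 0 + sn * α 1‖)]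
    · rw [← hnormβ]; nlinarith [sq_nonneg (‖c * β 0 + sn * β 1‖)]
  rw [norm_mul, Complex.norm_real, Real.norm_eq_abs, abs_of_pos hspos]
  have e0 := hbnd _ hu0
  have e1 := hbnd _ hu1
  have e2 := hbnd _ hv0
  have e3 := hbnd _ hv1
  have t1 := norm_sub_le (hQE (u0 / s) + hQE (u1 / s) - hQE (v0 / s)) (hQE (v1 / s))
  have t2 := norm_sub_le (hQE (u0 / s) + hQE (u1 / s)) (hQE (v0 / s))
  have t3 := norm_add_le (hQE (u0 / s)) (hQE (u1 / s))
  have hE : ‖hQE (u0 / s) + hQE (u1 / s) - hQE (v0 / s) - hQE (v1 / s)‖ ≤ 8 := by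
    linarith
  calc s * ‖hQE (u0 / s) + hQE (u1 / s) - hQE (v0 / s) - hQE (v1 / s)‖
      ≤ s * 8 := by gcongr
    _ = 8 * a * b := by rw [hs]; ring
end

section
/- Exact row norms of the preconditioned matrices: let M be an n×n paraunitary matrix of Laurent polynomials over ℂ, let Δ ∈ (0,1) be real, let ρ, ℓ ∈ ℕ, and let A = (Σ_{k=0}^{ρ+ℓ} Δ^k z^{−k}) · Id. Furthermore let V be any n×n paraunitary matrix, X any n×n complex unitary constant matrix, and B = V · (Σ_{i=ρ}^{ρ+ℓ} z^{−i}) · X. Then every row of M·A has norm sqrt(Σ_{k=0}^{ρ+ℓ} Δ^{2k}) (which is at most sqrt(1/(1 − Δ²))), and every row of M·B has norm sqrt(ℓ + 1). -/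
open scoped ComplexConjugate
open LaurentPolynomial Finset

section ParaConjLemmas

open LaurentPolynomial

lemma paraConj_apply' (p : LaurentPolynomial ℂ) (k : ℤ) : (paraConj p).coeff k = conj (p.coeff (-k)) := rfl

lemma paraConj_zero' : paraConj (0 : LaurentPolynomial ℂ) = 0 := by
  ext k
  rw [paraConj_apply']
  simp

lemma paraConj_add' (p q : LaurentPolynomial ℂ) :
    paraConj (p + q) = paraConj p + paraConj q := by
  ext k
  calc (paraConj (p + q)).coeff k = conj (p.coeff (-k) + q.coeff (-k)) := rfl
    _ = conj (p.coeff (-k)) + conj (q.coeff (-k)) := map_add _ _ _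
    _ = (paraConj p + paraConj q).coeff k := rfl

lemma paraConj_single' (n : ℤ) (a : ℂ) :
    paraConj (AddMonoidAlgebra.single n a : LaurentPolynomial ℂ)
      = AddMonoidAlgebra.single (-n) (conj a) := by
  ext k
  have h1 : (paraConj (AddMonoidAlgebra.single n a : LaurentPolynomial ℂ)).coeff k
      = conj ((Finsupp.single n a : ℤ →₀ ℂ) (-k)) := rfl
  have h2 : (AddMonoidAlgebra.single (-n) (conj a) : LaurentPolynomial ℂ).coeff k
      = (Finsupp.single (-n) (conj a) : ℤ →₀ ℂ) k := rfl
  rw [h1, h2, Finsupp.single_apply, Finsupp.single_apply]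
  rcases eq_or_ne n (-k) with h | h
  · rw [if_pos h, if_pos (by omega)]
  · rw [if_neg h, if_neg (by omega), map_zero]

lemma paraConj_mul' (p q : LaurentPolynomial ℂ) :
    paraConj (p * q) = paraConj p * paraConj q := by
  induction p using AddMonoidAlgebra.induction_linear with
  | zero => rw [zero_mul, paraConj_zero', zero_mul]
  | add f g hf hg => rw [add_mul, paraConj_add', hf, hg, paraConj_add', add_mul]
  | single n a =>
    induction q using AddMonoidAlgebra.induction_linear with
    | zero => rw [mul_zero, paraConj_zero', mul_zero]
    | add f g hf hg => rw [mul_add, paraConj_add', hf, hg, paraConj_add', mul_add]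
    | single m b =>
      rw [AddMonoidAlgebra.single_mul_single, paraConj_single', paraConj_single',
        paraConj_single', AddMonoidAlgebra.single_mul_single, map_mul, neg_add]

lemma paraConj_one' : paraConj (1 : LaurentPolynomial ℂ) = 1 := by
  rw [show (1 : LaurentPolynomial ℂ) = AddMonoidAlgebra.single 0 1 from rfl, paraConj_single']
  simp

end ParaConjLemmas

section MatrixLemmas

open LaurentPolynomial

/-- `paraConj` as a ring homomorphism. -/
noncomputable def pcHom : LaurentPolynomial ℂ →+* LaurentPolynomial ℂ where
  toFun := paraConj
  map_one' := paraConj_one'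
  map_mul' := paraConj_mul'
  map_zero' := paraConj_zero'
  map_add' := paraConj_add'

lemma pct_eq {n : ℕ} (U : Matrix (Fin n) (Fin n) (LaurentPolynomial ℂ)) :
    paraConjTranspose U = (U.map pcHom).transpose := by
  ext i j; rfl

lemma pct_mul {n : ℕ} (U W : Matrix (Fin n) (Fin n) (LaurentPolynomial ℂ)) :
    paraConjTranspose (U * W) = paraConjTranspose W * paraConjTranspose U := by
  rw [pct_eq, pct_eq, pct_eq, Matrix.map_mul, Matrix.transpose_mul]

lemma pct_smul {n : ℕ} (p : LaurentPolynomial ℂ)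
    (U : Matrix (Fin n) (Fin n) (LaurentPolynomial ℂ)) :
    paraConjTranspose (p • U) = paraConj p • paraConjTranspose U := by
  refine Matrix.ext fun i j => ?_
  show paraConj (p * U j i) = paraConj p * paraConj (U j i)
  exact paraConj_mul' _ _

lemma pct_one {n : ℕ} :
    paraConjTranspose (1 : Matrix (Fin n) (Fin n) (LaurentPolynomial ℂ)) = 1 := by
  rw [pct_eq, Matrix.map_one pcHom (map_zero _) (map_one _), Matrix.transpose_one]

lemma mul_paraConj_coeff_zero (p q : LaurentPolynomial ℂ) :
    (p * paraConj q).coeff 0 = ∑ k ∈ p.coeff.support, p.coeff k * conj (q.coeff k) := by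
  rw [AddMonoidAlgebra.coeff_mul, Finsupp.sum]
  refine Finset.sum_congr rfl fun a _ => ?_
  rw [Finsupp.sum]
  rw [Finset.sum_congr rfl fun b _ => if_congr (show a + b = 0 ↔ b = -a by omega)
    (rfl : p.coeff a * (paraConj q).coeff b = p.coeff a * (paraConj q).coeff b) rfl]
  rw [Finset.sum_ite_eq' (paraConj q).coeff.support (-a) fun b => p.coeff a * (paraConj q).coeff b]
  by_cases h : -a ∈ (paraConj q).coeff.support
  · rw [if_pos h, paraConj_apply', neg_neg]
  · rw [if_neg h]
    have h0 : conj (q.coeff a) = 0 := by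
      have := Finsupp.notMem_support_iff.mp h
      rwa [paraConj_apply', neg_neg] at this
    rw [h0, mul_zero]

lemma coeff_zero_re (p : LaurentPolynomial ℂ) :
    ((p * paraConj p).coeff 0).re = ∑ k ∈ p.coeff.support, ‖p.coeff k‖ ^ 2 := by
  rw [mul_paraConj_coeff_zero, Complex.re_sum]
  refine Finset.sum_congr rfl fun k _ => ?_
  rw [Complex.mul_conj]
  simp [Complex.sq_norm]

lemma rowNorm_of_mul_pct {n : ℕ} (N : Matrix (Fin n) (Fin n) (LaurentPolynomial ℂ))
    (r : LaurentPolynomial ℂ) (hN : N * paraConjTranspose N = r • 1) (i : Fin n) :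
    rowNorm N i = Real.sqrt ((r.coeff 0).re) := by
  have hdiag : (N * paraConjTranspose N) i i = r := by
    rw [hN, Matrix.smul_apply, Matrix.one_apply_eq, smul_eq_mul, mul_one]
  have hmul : (N * paraConjTranspose N) i i = ∑ j, N i j * paraConj (N i j) := by
    rw [Matrix.mul_apply]; rfl
  rw [rowNorm]
  congr 1
  calc ∑ j, pnorm (N i j) ^ 2
      = ∑ j, ((N i j * paraConj (N i j)).coeff 0).re := by
        refine Finset.sum_congr rfl fun j _ => ?_
        rw [pnorm, Real.sq_sqrt (by positivity), coeff_zero_re]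
    _ = ((∑ j, N i j * paraConj (N i j)).coeff 0).re := by
        rw [show ((∑ j, N i j * paraConj (N i j)).coeff 0 : ℂ)
            = ∑ j, (N i j * paraConj (N i j)).coeff 0 by
              rw [AddMonoidAlgebra.coeff_sum, Finsupp.finset_sum_apply],
          Complex.re_sum]
    _ = (r.coeff 0).re := by rw [← hmul, hdiag]

lemma sandwich {n : ℕ} (U W : Matrix (Fin n) (Fin n) (LaurentPolynomial ℂ))
    (r : LaurentPolynomial ℂ) (hU : U * paraConjTranspose U = 1)
    (hW : W * paraConjTranspose W = r • 1) :
    (U * W) * paraConjTranspose (U * W) = r • 1 := by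
  rw [pct_mul, Matrix.mul_assoc, ← Matrix.mul_assoc W, hW, Matrix.smul_mul, Matrix.one_mul,
    Matrix.mul_smul, hU]

lemma smul_one_pct {n : ℕ} (p : LaurentPolynomial ℂ) :
    (p • (1 : Matrix (Fin n) (Fin n) (LaurentPolynomial ℂ))) * paraConjTranspose (p • 1)
      = (p * paraConj p) • 1 := by
  rw [pct_smul, pct_one, Matrix.smul_mul, Matrix.mul_smul, Matrix.one_mul, smul_smul]

lemma pct_mapC {n : ℕ} (X : Matrix (Fin n) (Fin n) ℂ) :
    paraConjTranspose (X.map LaurentPolynomial.C) = X.conjTranspose.map LaurentPolynomial.C := by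
  refine Matrix.ext fun i j => ?_
  show paraConj (LaurentPolynomial.C (X j i)) = LaurentPolynomial.C (star (X j i))
  rw [← LaurentPolynomial.single_eq_C, paraConj_single', neg_zero, LaurentPolynomial.single_eq_C,
    Complex.star_def]

lemma q_smul_X_pct {n : ℕ} (q : LaurentPolynomial ℂ) (X : Matrix (Fin n) (Fin n) ℂ)
    (hX : X.conjTranspose * X = 1) :
    (q • X.map LaurentPolynomial.C) * paraConjTranspose (q • X.map LaurentPolynomial.C)
      = (q * paraConj q) • 1 := by
  have hX' : X * X.conjTranspose = 1 := mul_eq_one_comm.mp hX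
  have hXC : (X.map LaurentPolynomial.C) * (X.conjTranspose.map LaurentPolynomial.C) = 1 := by
    rw [← Matrix.map_mul, hX', Matrix.map_one _ (map_zero _) (map_one _)]
  rw [pct_smul, pct_mapC, Matrix.smul_mul, Matrix.mul_smul, smul_smul, hXC]

lemma key_sum (s : Finset ℕ) (c : ℕ → ℂ) :
    ∑ k ∈ (∑ k ∈ s, (AddMonoidAlgebra.single (-(k : ℤ)) (c k) : LaurentPolynomial ℂ)).coeff.support,
        ‖(∑ k ∈ s, (AddMonoidAlgebra.single (-(k : ℤ)) (c k) : LaurentPolynomial ℂ)).coeff k‖ ^ 2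
      = ∑ k ∈ s, ‖c k‖ ^ 2 := by
  set p : LaurentPolynomial ℂ :=
    ∑ k ∈ s, (AddMonoidAlgebra.single (-(k : ℤ)) (c k) : LaurentPolynomial ℂ)
    with hp
  have happ : ∀ x : ℤ, p.coeff x = ∑ k ∈ s, (Finsupp.single (-(k : ℤ)) (c k) : ℤ →₀ ℂ) x :=
    fun x => by
      simp only [hp, AddMonoidAlgebra.coeff_sum, Finsupp.finset_sum_apply,
        AddMonoidAlgebra.coeff_single]
  have hcoeff : ∀ j ∈ s, p.coeff (-(j : ℤ)) = c j := by
    intro j hj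
    rw [happ]
    rw [Finset.sum_eq_single j (fun k _ hkj => by
        rw [Finsupp.single_apply, if_neg (fun h => hkj (by exact_mod_cast neg_inj.mp h))])
      (fun h => absurd hj h)]
    rw [Finsupp.single_apply, if_pos rfl]
  have hsupp : p.coeff.support ⊆ s.image fun k : ℕ => -(k : ℤ) := by
    intro x hx
    by_contra hmem
    apply Finsupp.mem_support_iff.mp hx
    rw [happ]
    refine Finset.sum_eq_zero fun k hk => ?_
    rw [Finsupp.single_apply, if_neg fun h => hmem (Finset.mem_image.mpr ⟨k, hk, h⟩)]
  calc ∑ k ∈ p.coeff.support, ‖p.coeff k‖ ^ 2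
      = ∑ k ∈ s.image (fun k : ℕ => -(k : ℤ)), ‖p.coeff k‖ ^ 2 := by
        refine Finset.sum_subset hsupp fun x _ hx => ?_
        rw [Finsupp.notMem_support_iff.mp hx]
        simp
    _ = ∑ k ∈ s, ‖p.coeff (-(k : ℤ))‖ ^ 2 := by
        refine Finset.sum_image fun x _ y _ h => by exact_mod_cast neg_inj.mp h
    _ = ∑ k ∈ s, ‖c k‖ ^ 2 :=
        Finset.sum_congr rfl fun j hj => by rw [hcoeff j hj]

end MatrixLemmas
/-- exact row norms of the preconditioned matrices. -/
theorem rowNorms_of_preconditioned {n : ℕ}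
    (M V : Matrix (Fin n) (Fin n) (LaurentPolynomial ℂ))
    (hM : IsParaunitary M) (hV : IsParaunitary V)
    (X : Matrix (Fin n) (Fin n) ℂ) (hX : X.conjTranspose * X = 1)
    (Δ : ℝ) (h0 : 0 < Δ) (h1 : Δ < 1) (ρ ℓ : ℕ) :
    (∀ i : Fin n,
        rowNorm (M * (((∑ k ∈ Finset.range (ρ + ℓ + 1),
            LaurentPolynomial.C ((Δ : ℂ) ^ k) * LaurentPolynomial.T (-(k : ℤ))) :
              LaurentPolynomial ℂ)
          • (1 : Matrix (Fin n) (Fin n) (LaurentPolynomial ℂ)))) i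
          = Real.sqrt (∑ k ∈ Finset.range (ρ + ℓ + 1), Δ ^ (2 * k))) ∧
    Real.sqrt (∑ k ∈ Finset.range (ρ + ℓ + 1), Δ ^ (2 * k))
      ≤ Real.sqrt (1 / (1 - Δ ^ 2)) ∧
    (∀ i : Fin n,
        rowNorm (M * (V * (((∑ j ∈ Finset.Icc ρ (ρ + ℓ),
            LaurentPolynomial.T (-(j : ℤ))) : LaurentPolynomial ℂ)
          • X.map LaurentPolynomial.C))) i
          = Real.sqrt ((ℓ : ℝ) + 1)) := by
  have hMM : M * paraConjTranspose M = 1 := mul_eq_one_comm.mp hM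
  have hVV : V * paraConjTranspose V = 1 := mul_eq_one_comm.mp hV
  set m := ρ + ℓ + 1 with hm
  set p : LaurentPolynomial ℂ :=
    ∑ k ∈ Finset.range m, LaurentPolynomial.C ((Δ : ℂ) ^ k) * LaurentPolynomial.T (-(k : ℤ))
    with hpdef
  have hp : p = ∑ k ∈ Finset.range m,
      (AddMonoidAlgebra.single (-(k : ℤ)) ((Δ : ℂ) ^ k) : LaurentPolynomial ℂ) :=
    Finset.sum_congr rfl fun k _ => (LaurentPolynomial.single_eq_C_mul_T _ _).symm
  refine ⟨fun i => ?_, ?_, fun i => ?_⟩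
  · have hNN := sandwich M (p • 1) (p * paraConj p) hMM (smul_one_pct p)
    rw [rowNorm_of_mul_pct _ _ hNN i, coeff_zero_re]
    congr 1
    rw [hp, key_sum]
    refine Finset.sum_congr rfl fun k _ => ?_
    rw [← Complex.ofReal_pow, Complex.norm_real, Real.norm_eq_abs, abs_of_pos (pow_pos h0 k), ← pow_mul,
      mul_comm k 2]
  · have hΔ2 : Δ ^ 2 < 1 := by nlinarith
    have h1Δ : 0 < 1 - Δ ^ 2 := by linarith
    refine Real.sqrt_le_sqrt ?_
    rw [show (∑ k ∈ Finset.range m, Δ ^ (2 * k)) = ∑ k ∈ Finset.range m, (Δ ^ 2) ^ k from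
      Finset.sum_congr rfl fun k _ => by rw [pow_mul]]
    rw [geom_sum_eq (ne_of_lt hΔ2) m, ← neg_div_neg_eq, neg_sub, neg_sub]
    exact (div_le_div_iff_of_pos_right h1Δ).mpr
      (sub_le_self 1 (pow_nonneg (sq_nonneg Δ) m))
  · set q : LaurentPolynomial ℂ := ∑ j ∈ Finset.Icc ρ (ρ + ℓ), LaurentPolynomial.T (-(j : ℤ))
      with hqdef
    have hq : q = ∑ j ∈ Finset.Icc ρ (ρ + ℓ),
        (AddMonoidAlgebra.single (-(j : ℤ)) (1 : ℂ) : LaurentPolynomial ℂ) := rfl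
    have hNN := sandwich M (V * (q • X.map LaurentPolynomial.C)) (q * paraConj q) hMM
      (sandwich V (q • X.map LaurentPolynomial.C) _ hVV (q_smul_X_pct q X hX))
    rw [rowNorm_of_mul_pct _ _ hNN i, coeff_zero_re]
    congr 1
    rw [hq, key_sum]
    have hc : (Finset.Icc ρ (ρ + ℓ)).card = ℓ + 1 := by rw [Nat.card_Icc]; omega
    simp [Finset.sum_const, hc]
end
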